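/- Let X be an infinite set and let S be a semigroup of relations on X (under composition f∘g = {(x,z) : ∃ y, (x,y) ∈ f and (y,z) ∈ g}) with FSym(X) ⊆ S ⊆ FRel(X), where FSym(X) is the set of (graphs of) finitely supported bijections of X and FRel(X) is the set of finitely supported relations, with supp(f) = {x ∈ X : f(x) ≠ {x} or f⁻¹(x) ≠ {x}}. Then (S, supp) is a supp-perfect semigroup, and S is σ-discrete in its semi-Zariski topology and hence σ-discrete in every Hausdorff shift-invariant topology on S. -/

import Mathlib

/-- Composition of relations: `f ∘ g = {(x,z) : ∃ y, (x,y) ∈ f ∧ (y,z) ∈ g}`. -/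
def relComp {X : Type*} (f g : Set (X × X)) : Set (X × X) :=
  {p : X × X | ∃ y : X, (p.1, y) ∈ f ∧ (y, p.2) ∈ g}

/-- The image `f(x) = {y : (x,y) ∈ f}` of a point under a relation. -/
def relImg {X : Type*} (f : Set (X × X)) (x : X) : Set X := {y : X | (x, y) ∈ f}

/-- The preimage `f⁻¹(x) = {y : (y,x) ∈ f}` of a point under a relation. -/
def relPre {X : Type*} (f : Set (X × X)) (x : X) : Set X := {y : X | (y, x) ∈ f}

/-- The support of a relation: `supp f = {x : f(x) ≠ {x} or f⁻¹(x) ≠ {x}}`. -/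
def relSupp {X : Type*} (f : Set (X × X)) : Set X :=
  {x : X | relImg f x ≠ {x} ∨ relPre f x ≠ {x}}

/-- The semi-Zariski topology on a semigroup `S`: generated by the subbase of sets
`{x | a*x*b ≠ c}` and `{x | a*x*b ≠ c*x*d}` with `a, b, c, d ∈ S¹` (here `S¹ = WithOne S`
is `S` with an external identity adjoined). -/
def semiZariski (T : Type*) [Mul T] : TopologicalSpace T :=
  TopologicalSpace.generateFrom
    ({U : Set T | ∃ a b c : WithOne T, U = {x : T | a * (x : WithOne T) * b ≠ c}} ∪
     {U : Set T | ∃ a b c d : WithOne T,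
        U = {x : T | a * (x : WithOne T) * b ≠ c * (x : WithOne T) * d}})

/-- A topological space (given by a topology `τ` on `S`) is σ-discrete if it is a countable
union of subspaces, each of which is discrete in its subspace topology. -/
def SigmaDiscrete {S : Type*} (τ : TopologicalSpace S) : Prop :=
  ∃ D : ℕ → Set S, (⋃ n, D n) = Set.univ ∧
    ∀ n, @DiscreteTopology (D n) (TopologicalSpace.induced Subtype.val τ)

section Helpers
variable {X : Type*}

def grph (e : Equiv.Perm X) : Set (X × X) := {p : X × X | p.2 = e p.1}

lemma notSupp_img {f : Set (X × X)} {x : X} (h : x ∉ relSupp f) :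
    ∀ y, ((x, y) ∈ f ↔ y = x) := by
  intro y
  simp only [relSupp, Set.mem_setOf_eq, not_or, ne_eq, not_not] at h
  have hiff : (x, y) ∈ f ↔ y ∈ relImg f x := Iff.rfl
  rw [hiff, h.1, Set.mem_singleton_iff]

lemma notSupp_pre {f : Set (X × X)} {x : X} (h : x ∉ relSupp f) :
    ∀ y, ((y, x) ∈ f ↔ y = x) := by
  intro y
  simp only [relSupp, Set.mem_setOf_eq, not_or, ne_eq, not_not] at h
  have hiff : (y, x) ∈ f ↔ y ∈ relPre f x := Iff.rfl
  rw [hiff, h.2, Set.mem_singleton_iff]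

lemma relSupp_comp (f g : Set (X × X)) :
    relSupp (relComp f g) ⊆ relSupp f ∪ relSupp g := by
  intro x hx
  by_contra hc
  simp only [Set.mem_union, not_or] at hc
  obtain ⟨hf, hg⟩ := hc
  have himg : relImg (relComp f g) x = {x} := by
    ext y
    simp only [relImg, relComp, Set.mem_setOf_eq, Set.mem_singleton_iff]
    constructor
    · rintro ⟨b, hb1, hb2⟩
      have hb : b = x := (notSupp_img hf b).1 hb1
      subst hb
      exact (notSupp_img hg y).1 hb2
    · intro hy; subst hy
      exact ⟨y, (notSupp_img hf y).2 rfl, (notSupp_img hg y).2 rfl⟩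
  have hpre : relPre (relComp f g) x = {x} := by
    ext y
    simp only [relPre, relComp, Set.mem_setOf_eq, Set.mem_singleton_iff]
    constructor
    · rintro ⟨b, hb1, hb2⟩
      have hb : b = x := (notSupp_pre hg b).1 hb2
      subst hb
      exact (notSupp_pre hf y).1 hb1
    · intro hy; subst hy
      exact ⟨y, (notSupp_pre hf y).2 rfl, (notSupp_pre hg y).2 rfl⟩
  rcases hx with h | h
  · exact h himg
  · exact h hpre

lemma relComp_subset_of_disjoint {f g : Set (X × X)}
    (h : relSupp f ∩ relSupp g = ∅) : relComp f g ⊆ relComp g f := by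
  have hdis : ∀ x, x ∈ relSupp f → x ∉ relSupp g := by
    intro x h1 h2
    have : x ∈ relSupp f ∩ relSupp g := ⟨h1, h2⟩
    rw [h] at this; exact this
  rintro ⟨a, c⟩ ⟨b, hab, hbc⟩
  by_cases hbf : b ∈ relSupp f
  · have hbg : b ∉ relSupp g := hdis b hbf
    have hc : c = b := (notSupp_img hbg c).1 hbc
    have hag : a ∉ relSupp g := by
      intro hag
      have haf : a ∉ relSupp f := fun h' => hdis a h' hag
      have hba : b = a := (notSupp_img haf b).1 hab
      exact hbg (hba ▸ hag)
    exact ⟨a, (notSupp_img hag a).2 rfl, by rw [hc]; exact hab⟩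
  · by_cases hbg : b ∈ relSupp g
    · have ha : a = b := (notSupp_pre hbf a).1 hab
      have hcf : c ∉ relSupp f := by
        intro hcf
        have hcg : c ∉ relSupp g := hdis c hcf
        have hbcq : b = c := (notSupp_pre hcg b).1 hbc
        exact hbf (hbcq ▸ hcf)
      exact ⟨c, by rw [ha]; exact hbc, (notSupp_img hcf c).2 rfl⟩
    · have ha : a = b := (notSupp_pre hbf a).1 hab
      have hc : c = b := (notSupp_img hbg c).1 hbc
      refine ⟨b, ?_, ?_⟩
      · rw [ha]; exact (notSupp_img hbg b).2 rfl
      · rw [hc]; exact (notSupp_img hbf b).2 rfl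

lemma relSupp_grph (e : Equiv.Perm X) : relSupp (grph e) = {x | e x ≠ x} := by
  ext x
  have h1 : relImg (grph e) x = {e x} := by
    ext y; simp [relImg, grph]
  have h2 : relPre (grph e) x = {e.symm x} := by
    ext y
    simp only [relPre, grph, Set.mem_setOf_eq, Set.mem_singleton_iff]
    constructor
    · intro h; rw [h]; simp
    · rintro rfl; simp
  simp only [relSupp, Set.mem_setOf_eq, h1, h2]
  constructor
  · rintro (h | h)
    · intro he; exact h (by rw [he])
    · intro he
      apply h
      have : e.symm x = x := by
        apply e.injective; rw [he, Equiv.apply_symm_apply]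
      rw [this]
  · intro he
    left
    intro hs
    exact he (Set.singleton_eq_singleton_iff.1 hs)

lemma inv_of_comm {e : Equiv.Perm X} {f : Set (X × X)}
    (h : relComp (grph e) f = relComp f (grph e)) :
    ∀ a b, ((a, b) ∈ f ↔ (e a, e b) ∈ f) := by
  intro a b
  have h1 : (a, e b) ∈ relComp (grph e) f ↔ (e a, e b) ∈ f := by
    constructor
    · rintro ⟨y, hy, hyf⟩
      have : y = e a := hy
      rwa [this] at hyf
    · intro hf; exact ⟨e a, rfl, hf⟩
  have h2 : (a, e b) ∈ relComp f (grph e) ↔ (a, b) ∈ f := by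
    constructor
    · rintro ⟨y, hyf, hy⟩
      have : e b = e y := hy
      have hyb : y = b := e.injective this.symm
      rwa [hyb] at hyf
    · intro hf; exact ⟨b, hf, rfl⟩
  rw [← h2, ← h1, h]

lemma move_contradiction [DecidableEq X] {f : Set (X × X)} {x w : X}
    (hx : x ∈ relSupp f) (hw : w ∉ relSupp f) (hne : w ≠ x)
    (hinv : ∀ a b, ((a, b) ∈ f ↔ (Equiv.swap x w a, Equiv.swap x w b) ∈ f)) : False := by
  have hww : (w, w) ∈ f := (notSupp_img hw w).2 rfl
  have hxx : (x, x) ∈ f := by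
    have := (hinv w w).1 hww
    rwa [Equiv.swap_apply_right] at this
  have himg : relImg f x = {x} := by
    ext y
    simp only [relImg, Set.mem_setOf_eq, Set.mem_singleton_iff]
    constructor
    · intro hy
      have h2 := (hinv x y).1 hy
      rw [Equiv.swap_apply_left] at h2
      have h3 : Equiv.swap x w y = w := (notSupp_img hw _).1 h2
      have : Equiv.swap x w y = Equiv.swap x w x := by rw [h3, Equiv.swap_apply_left]
      exact (Equiv.swap x w).injective this
    · rintro rfl; exact hxx
  have hpre : relPre f x = {x} := by
    ext y
    simp only [relPre, Set.mem_setOf_eq, Set.mem_singleton_iff]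
    constructor
    · intro hy
      have h2 := (hinv y x).1 hy
      rw [Equiv.swap_apply_left] at h2
      have h3 : Equiv.swap x w y = w := (notSupp_pre hw _).1 h2
      have : Equiv.swap x w y = Equiv.swap x w x := by rw [h3, Equiv.swap_apply_left]
      exact (Equiv.swap x w).injective this
    · rintro rfl; exact hxx
  rcases hx with h | h
  · exact h himg
  · exact h hpre

lemma eq_of_inter_eq_aux {f g : Set (X × X)} {F : Set X}
    (hf : relSupp f ⊆ F) (hg : relSupp g ⊆ F)
    (h : f ∩ F ×ˢ F = g ∩ F ×ˢ F) : f ⊆ g := by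
  rintro ⟨a, b⟩ hab
  by_cases haF : a ∈ F
  · by_cases hbF : b ∈ F
    · have : (a, b) ∈ g ∩ F ×ˢ F := by rw [← h]; exact ⟨hab, haF, hbF⟩
      exact this.1
    · have hbf : b ∉ relSupp f := fun h' => hbF (hf h')
      have hba : a = b := (notSupp_pre hbf a).1 hab
      have hbg : b ∉ relSupp g := fun h' => hbF (hg h')
      rw [hba]
      exact (notSupp_img hbg b).2 rfl
  · have haf : a ∉ relSupp f := fun h' => haF (hf h')
    have hba : b = a := (notSupp_img haf b).1 hab
    have hag : a ∉ relSupp g := fun h' => haF (hg h')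
    rw [hba]
    exact (notSupp_img hag a).2 rfl

lemma eq_of_inter_eq {f g : Set (X × X)} {F : Set X}
    (hf : relSupp f ⊆ F) (hg : relSupp g ⊆ F)
    (h : f ∩ F ×ˢ F = g ∩ F ×ˢ F) : f = g :=
  Set.Subset.antisymm (eq_of_inter_eq_aux hf hg h) (eq_of_inter_eq_aux hg hf h.symm)

lemma finite_supp_subset (S : Set (Set (X × X))) {F : Set X} (hF : F.Finite) :
    {f : ↥S | relSupp (f : Set (X × X)) ⊆ F}.Finite := by
  have hinj : Set.InjOn (fun f : ↥S => (f : Set (X × X)) ∩ F ×ˢ F)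
      {f : ↥S | relSupp (f : Set (X × X)) ⊆ F} := by
    intro f hf g hg h
    exact Subtype.ext (eq_of_inter_eq hf hg h)
  apply Set.Finite.of_finite_image ?_ hinj
  apply ((hF.prod hF).finite_subsets).subset
  rintro s ⟨f, _, rfl⟩
  exact Set.inter_subset_right

lemma swap_moved_subset [DecidableEq X] (x w : X) :
    {z : X | Equiv.swap x w z ≠ z} ⊆ {x, w} := by
  intro z hz
  simp only [Set.mem_setOf_eq] at hz
  by_contra hc
  simp only [Set.mem_insert_iff, Set.mem_singleton_iff, not_or] at hc
  exact hz (Equiv.swap_apply_of_ne_of_ne hc.1 hc.2)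

lemma swap_moved_finite [DecidableEq X] (x w : X) : ({z : X | Equiv.swap x w z ≠ z}).Finite :=
  ((Set.finite_singleton w).insert x).subset (swap_moved_subset x w)

end Helpers

/-- Let `X` be an infinite set and `S` a semigroup of relations on `X` (multiplication being
composition of relations) with `FSym X ⊆ S ⊆ FRel X`. Then `(S, supp)` is a supp-perfect
semigroup, `S` is σ-discrete in its semi-Zariski topology, and `S` is σ-discrete in every
Hausdorff shift-invariant topology on `S`. -/
theorem semigroup_between_FSym_FRel_suppPerfect_sigmaDiscrete
    {X : Type*} [Infinite X] (S : Set (Set (X × X))) [Mul ↥S]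
    (hmul : ∀ f g : ↥S, ((f * g : ↥S) : Set (X × X)) = relComp (f : Set (X × X)) g)
    (hFSym : ∀ e : Equiv.Perm X, {x : X | e x ≠ x}.Finite → {p : X × X | p.2 = e p.1} ∈ S)
    (hFRel : ∀ f ∈ S, (relSupp f).Finite) :
    -- (S, supp) is a supp-perfect semigroup:
    ((∀ f g : ↥S, relSupp ((f * g : ↥S) : Set (X × X)) ⊆
        relSupp (f : Set (X × X)) ∪ relSupp (g : Set (X × X))) ∧
     (∀ f g : ↥S, relSupp (f : Set (X × X)) ∩ relSupp (g : Set (X × X)) = ∅ → f * g = g * f) ∧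
     (⋃ f : ↥S, relSupp (f : Set (X × X))) = Set.univ ∧
     (∀ f : ↥S, (relSupp (f : Set (X × X))).Finite) ∧
     (∀ F : Set X, F.Finite → {f : ↥S | relSupp (f : Set (X × X)) ⊆ F}.Finite) ∧
     (∀ F : Set X, F.Finite →
        {f : ↥S | relSupp (f : Set (X × X)) ⊆ F} =
          {g : ↥S | ∀ f : ↥S, relSupp (f : Set (X × X)) ⊆ Fᶜ → f * g = g * f})) ∧
    -- S is σ-discrete in its semi-Zariski topology:
    SigmaDiscrete (semiZariski ↥S) ∧
    -- S is σ-discrete in every Hausdorff shift-invariant topology: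
    (∀ τ : TopologicalSpace ↥S, @T2Space ↥S τ →
      (∀ a : ↥S, @Continuous _ _ τ τ (fun x => a * x)) →
      (∀ a : ↥S, @Continuous _ _ τ τ (fun x => x * a)) →
      SigmaDiscrete τ) := by
  classical
  have hfin : ∀ f : ↥S, (relSupp (f : Set (X × X))).Finite := fun f => hFRel _ f.2
  -- transposition elements of S
  have htmem : ∀ d w : X, grph (Equiv.swap d w) ∈ S :=
    fun d w => hFSym (Equiv.swap d w) (swap_moved_finite d w)
  set tS : X → X → ↥S := fun d w => ⟨grph (Equiv.swap d w), htmem d w⟩ with htS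
  -- commutation from disjoint supports
  have hcomm : ∀ f g : ↥S,
      relSupp (f : Set (X × X)) ∩ relSupp (g : Set (X × X)) = ∅ → f * g = g * f := by
    intro f g h
    apply Subtype.ext
    rw [hmul, hmul]
    exact Set.Subset.antisymm (relComp_subset_of_disjoint h)
      (relComp_subset_of_disjoint (by rw [Set.inter_comm]; exact h))
  -- support of tS
  have htsupp : ∀ d w : X, relSupp ((tS d w : ↥S) : Set (X × X)) ⊆ {d, w} := by
    intro d w
    show relSupp (grph (Equiv.swap d w)) ⊆ _
    rw [relSupp_grph]
    exact swap_moved_subset d w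
  -- Claim A : an element of S commuting with tS d w with d in its support, w outside, is absurd
  have hmove : ∀ (g : ↥S) (d w : X), d ∈ relSupp (g : Set (X × X)) →
      w ∉ relSupp (g : Set (X × X)) → w ≠ d → tS d w * g = g * tS d w → False := by
    intro g d w hd hw hne hcm
    have hrel : relComp (grph (Equiv.swap d w)) (g : Set (X × X))
        = relComp (g : Set (X × X)) (grph (Equiv.swap d w)) := by
      have := congrArg Subtype.val hcm
      rw [hmul, hmul] at this
      exact this
    exact move_contradiction hd hw hne (inv_of_comm hrel)
  -- Claim B : if tS d w does not commute with f then supp f meets {d, w}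
  have hmeet : ∀ (f : ↥S) (d w : X), tS d w * f ≠ f * tS d w →
      d ∈ relSupp (f : Set (X × X)) ∨ w ∈ relSupp (f : Set (X × X)) := by
    intro f d w hne
    by_contra hc
    simp only [not_or] at hc
    apply hne
    apply hcomm
    apply Set.eq_empty_iff_forall_notMem.2
    rintro z ⟨hz1, hz2⟩
    rcases htsupp d w hz1 with h | h
    · exact hc.1 (h ▸ hz2)
    · rw [Set.mem_singleton_iff] at h
      exact hc.2 (h ▸ hz2)
  -- subbasic open sets
  have hsub1 : ∀ h : ↥S, @IsOpen _ (semiZariski ↥S) {x : ↥S | x ≠ h} := by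
    intro h
    apply TopologicalSpace.isOpen_generateFrom_of_mem
    left
    refine ⟨1, 1, (h : WithOne ↥S), ?_⟩
    ext x
    simp only [Set.mem_setOf_eq, one_mul, mul_one, ne_eq, WithOne.coe_inj]
  have hsub2 : ∀ t : ↥S, @IsOpen _ (semiZariski ↥S) {x : ↥S | t * x ≠ x * t} := by
    intro t
    apply TopologicalSpace.isOpen_generateFrom_of_mem
    right
    refine ⟨(t : WithOne ↥S), 1, 1, (t : WithOne ↥S), ?_⟩
    ext x
    simp only [Set.mem_setOf_eq, one_mul, mul_one, ← WithOne.coe_mul, ne_eq, WithOne.coe_inj]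
  -- the σ-discreteness in the semi-Zariski topology
  have hZ : SigmaDiscrete (semiZariski ↥S) := by
    refine ⟨fun n => {f : ↥S | (relSupp (f : Set (X × X))).ncard = n}, ?_, ?_⟩
    · apply Set.eq_univ_iff_forall.2
      intro f
      exact Set.mem_iUnion.2 ⟨(relSupp (f : Set (X × X))).ncard, rfl⟩
    · intro n
      letI := semiZariski ↥S
      letI : TopologicalSpace {f : ↥S | (relSupp (f : Set (X × X))).ncard = n} :=
        TopologicalSpace.induced Subtype.val (semiZariski ↥S)
      apply discreteTopology_iff_isOpen_singleton.2
      rintro ⟨g, hg⟩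
      rw [isOpen_induced_iff]
      have hg' : (relSupp (g : Set (X × X))).ncard = n := hg
      have hgfin := hfin g
      obtain ⟨W, hWsub, hWcard⟩ := hgfin.infinite_compl.exists_subset_card_eq (n + 1)
      have hTfin : {f : ↥S | relSupp (f : Set (X × X)) ⊆ relSupp (g : Set (X × X))}.Finite :=
        finite_supp_subset S hgfin
      refine ⟨(⋂ d ∈ hgfin.toFinset, ⋂ w ∈ W, {x : ↥S | tS d w * x ≠ x * tS d w}) ∩
        (⋂ h ∈ hTfin.toFinset.erase g, {x : ↥S | x ≠ h}), ?_, ?_⟩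
      · apply IsOpen.inter
        · exact isOpen_biInter_finset fun d _ => isOpen_biInter_finset fun w _ => hsub2 _
        · exact isOpen_biInter_finset fun h _ => hsub1 h
      · ext ⟨f, hf⟩
        have hf' : (relSupp (f : Set (X × X))).ncard = n := hf
        simp only [Set.mem_preimage, Set.mem_inter_iff, Set.mem_iInter, Set.mem_setOf_eq,
          Set.mem_singleton_iff, Subtype.mk.injEq]
        constructor
        · rintro ⟨h1, h2⟩
          have hsupp : relSupp (g : Set (X × X)) ⊆ relSupp (f : Set (X × X)) := by
            intro d hd
            by_contra hdf
            have hWf : (W : Set X) ⊆ relSupp (f : Set (X × X)) := by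
              intro w hw
              rcases hmeet f d w (h1 d (hgfin.mem_toFinset.2 hd) w hw) with h | h
              · exact absurd h hdf
              · exact h
            have hcard : n + 1 ≤ n := by
              calc n + 1 = W.card := hWcard.symm
              _ = (W : Set X).ncard := (Set.ncard_coe_finset W).symm
              _ ≤ (relSupp (f : Set (X × X))).ncard := Set.ncard_le_ncard hWf (hfin f)
              _ = n := hf'
            omega
          have hsuppeq : relSupp (g : Set (X × X)) = relSupp (f : Set (X × X)) :=
            Set.eq_of_subset_of_ncard_le hsupp (le_of_eq (hf'.trans hg'.symm)) (hfin f)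
          by_contra hne
          refine h2 f (Finset.mem_erase.2 ⟨hne, hTfin.mem_toFinset.2 ?_⟩) rfl
          exact hsuppeq.symm.subset
        · intro hfg
          subst hfg
          constructor
          · intro d hd w hw
            have hdg : d ∈ relSupp (f : Set (X × X)) := hgfin.mem_toFinset.1 hd
            have hwg : w ∉ relSupp (f : Set (X × X)) := hWsub hw
            intro hcm
            exact hmove f d w hdg hwg (fun he => hwg (he ▸ hdg)) hcm
          · intro h hh he
            exact (Finset.mem_erase.1 hh).1 (he ▸ rfl)
  refine ⟨⟨?_, hcomm, ?_, hfin, fun F hF => finite_supp_subset S hF, ?_⟩, hZ, ?_⟩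
  · -- supp (f*g) ⊆ supp f ∪ supp g
    intro f g
    rw [hmul]
    exact relSupp_comp _ _
  · -- union of supports is everything
    apply Set.eq_univ_iff_forall.2
    intro x
    obtain ⟨w, hw⟩ := exists_ne x
    refine Set.mem_iUnion.2 ⟨tS x w, ?_⟩
    have : x ∈ relSupp (grph (Equiv.swap x w)) := by
      rw [relSupp_grph]
      simp only [Set.mem_setOf_eq, Equiv.swap_apply_left]
      exact hw
    exact this
  · -- centralizer description
    intro F hF
    ext g
    simp only [Set.mem_setOf_eq]
    constructor
    · intro hgF f hfF
      apply hcomm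
      apply Set.eq_empty_iff_forall_notMem.2
      rintro z ⟨h1, h2⟩
      exact (hfF h1) (hgF h2)
    · intro hcent x hxg
      by_contra hxF
      obtain ⟨w, hw⟩ :=
        (((hfin g).union hF).union (Set.finite_singleton x)).infinite_compl.nonempty
      simp only [Set.compl_union, Set.mem_inter_iff, Set.mem_compl_iff,
        Set.mem_singleton_iff] at hw
      obtain ⟨⟨hw1, hw2⟩, hw3⟩ := hw
      have hts : relSupp ((tS x w : ↥S) : Set (X × X)) ⊆ Fᶜ := by
        intro z hz
        rcases htsupp x w hz with h | h
        · exact h ▸ hxF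
        · rw [Set.mem_singleton_iff] at h
          exact h ▸ hw2
      exact hmove g x w hxg hw1 hw3 (hcent (tS x w) hts)
  · -- every Hausdorff shift-invariant topology
    intro τ hT2 hcl hcr
    letI := τ
    haveI := hT2
    have key : ∀ a b : WithOne ↥S, ∃ φ : ↥S → ↥S,
        Continuous φ ∧ ∀ x : ↥S, a * (x : WithOne ↥S) * b = ↑(φ x) := by
      intro a b
      induction a using WithOne.recOneCoe with
      | one =>
        induction b using WithOne.recOneCoe with
        | one => exact ⟨id, continuous_id, fun x => by simp⟩
        | coe b => exact ⟨fun x => x * b, hcr b, fun x => by simp [WithOne.coe_mul]⟩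
      | coe a =>
        induction b using WithOne.recOneCoe with
        | one => exact ⟨fun x => a * x, hcl a, fun x => by simp [WithOne.coe_mul]⟩
        | coe b =>
          refine ⟨fun x => a * x * b, ?_, fun x => by simp [WithOne.coe_mul]⟩
          exact (hcr b).comp (hcl a)
    have hle : τ ≤ semiZariski ↥S := by
      apply le_generateFrom
      rintro U (⟨a, b, c, rfl⟩ | ⟨a, b, c, d, rfl⟩)
      · obtain ⟨φ, hφ, hφeq⟩ := key a b
        induction c using WithOne.recOneCoe with
        | one =>
          have hU : {x : ↥S | a * ↑x * b ≠ 1} = Set.univ := by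
            ext x
            simp [hφeq x, WithOne.coe_ne_one]
          rw [hU]
          exact isOpen_univ
        | coe c =>
          have hU : {x : ↥S | a * ↑x * b ≠ (c : WithOne ↥S)} = φ ⁻¹' ({c}ᶜ) := by
            ext x
            simp [hφeq x, WithOne.coe_inj]
          rw [hU]
          exact (isClosed_singleton.isOpen_compl).preimage hφ
      · obtain ⟨φ, hφ, hφeq⟩ := key a b
        obtain ⟨ψ, hψ, hψeq⟩ := key c d
        have hU : {x : ↥S | a * ↑x * b ≠ c * ↑x * d} = {x : ↥S | φ x = ψ x}ᶜ := by
          ext x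
          simp [hφeq x, hψeq x, WithOne.coe_inj]
        rw [hU]
        exact (isClosed_eq hφ hψ).isOpen_compl
    obtain ⟨D, hD, hdisc⟩ := hZ
    refine ⟨D, hD, fun n => ?_⟩
    have h1 : TopologicalSpace.induced (Subtype.val : D n → ↥S) (semiZariski ↥S) = ⊥ :=
      (hdisc n).eq_bot
    have h2 : TopologicalSpace.induced (Subtype.val : D n → ↥S) τ ≤ ⊥ :=
      h1 ▸ induced_mono hle
    exact ⟨le_bot_iff.1 h2⟩
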